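/- (Extremal solutions of Peano's example.) Every differentiable function φ : ℝ → ℝ with φ(0) = 0 and φ'(t) = 3·|φ(t)|^{2/3} for all t ∈ ℝ satisfies min{t, 0}^3 ≤ φ(t) ≤ max{t, 0}^3 for all t ∈ ℝ; that is, the function which equals t^3 for t < 0 and 0 for t ≥ 0 is the least solution, and the function which equals 0 for t < 0 and t^3 for t ≥ 0 is the greatest solution, of the problem y' = 3|y|^{2/3}, y(0) = 0 on ℝ. -/

import Mathlib

open Set

lemma peano_mono (φ : ℝ → ℝ) (hdiff : Differentiable ℝ φ)
    (hode : ∀ t : ℝ, deriv φ t = 3 * |φ t| ^ ((2 : ℝ) / 3)) : Monotone φ := by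
  apply monotone_of_deriv_nonneg hdiff
  intro x
  rw [hode]
  positivity

lemma peano_aux (φ : ℝ → ℝ) (hdiff : Differentiable ℝ φ) (h0 : φ 0 = 0)
    (hode : ∀ t : ℝ, deriv φ t = 3 * |φ t| ^ ((2 : ℝ) / 3)) :
    ∀ t : ℝ, 0 ≤ t → φ t ≤ t ^ 3 := by
  have mono := peano_mono φ hdiff hode
  intro t₀ ht₀
  have hnonneg : ∀ s, 0 ≤ s → 0 ≤ φ s := fun s hs => h0 ▸ mono hs
  rcases eq_or_lt_of_le (hnonneg t₀ ht₀) with h | hpos0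
  · rw [← h]; positivity
  -- set of zeros
  set S : Set ℝ := Icc 0 t₀ ∩ φ ⁻¹' {0} with hS
  have hSne : S.Nonempty := ⟨0, ⟨le_refl 0, ht₀⟩, h0⟩
  have hScl : IsClosed S := (isClosed_Icc).inter (isClosed_singleton.preimage hdiff.continuous)
  have hSbdd : BddAbove S := ⟨t₀, fun x hx => hx.1.2⟩
  set a := sSup S with ha
  have haS : a ∈ S := hScl.csSup_mem hSne hSbdd
  have hφa : φ a = 0 := haS.2
  have ha0 : 0 ≤ a := haS.1.1
  have hat₀ : a < t₀ := lt_of_le_of_ne haS.1.2 fun h => hpos0.ne' (h ▸ hφa)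
  have hpos : ∀ s, a < s → 0 < φ s := by
    intro s hs
    rcases le_or_gt s t₀ with h1 | h1
    · rcases (hnonneg s (ha0.trans hs.le)).lt_or_eq with h2 | h2
      · exact h2
      · exact absurd (le_csSup hSbdd ⟨⟨ha0.trans hs.le, h1⟩, h2.symm⟩) (not_le.mpr hs)
    · exact hpos0.trans_le (mono h1.le)
  set u : ℝ → ℝ := fun s => (φ s) ^ ((1:ℝ)/3) with hu
  have hud : ∀ s, a < s → HasDerivAt u 1 s := by
    intro s hs
    have hφs := hpos s hs
    have h1 : HasDerivAt φ (3 * |φ s| ^ ((2:ℝ)/3)) s := by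
      rw [← hode]; exact (hdiff s).hasDerivAt
    have h2 := h1.rpow_const (p := (1:ℝ)/3) (Or.inl hφs.ne')
    convert h2 using 1
    rw [abs_of_pos hφs]
    rw [show (3:ℝ) * φ s ^ ((2:ℝ)/3) * ((1:ℝ)/3) * φ s ^ ((1:ℝ)/3 - 1)
        = φ s ^ ((2:ℝ)/3) * φ s ^ ((1:ℝ)/3 - 1) by ring,
      ← Real.rpow_add hφs]
    norm_num
  have key : ∀ s, a < s → s < t₀ → u s = s + (u t₀ - t₀) := by
    intro s hs hst
    obtain ⟨c, hc, hc'⟩ := exists_hasDerivAt_eq_slope u (fun _ => 1) hst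
      (by
        apply ContinuousOn.rpow_const
        · exact hdiff.continuous.continuousOn
        · intro x hx; exact Or.inl (hpos x (hs.trans_le hx.1)).ne')
      (fun x hx => hud x (hs.trans hx.1))
    have h3 : (u t₀ - u s) / (t₀ - s) = 1 := hc'.symm
    rw [div_eq_one_iff_eq (sub_ne_zero.mpr (by linarith : t₀ ≠ s))] at h3
    have : u t₀ - u s = t₀ - s := by linarith
    linarith
  have hua : u a = 0 := by
    show φ a ^ ((1:ℝ)/3) = 0
    rw [hφa]
    exact Real.zero_rpow (by norm_num)
  have hucont : ContinuousAt u a := by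
    have h1 : ContinuousAt (fun x : ℝ => x ^ ((1:ℝ)/3)) (φ a) :=
      Real.continuousAt_rpow_const _ _ (Or.inr (by norm_num))
    exact h1.comp (hdiff.continuous.continuousAt)
  have hlim : Filter.Tendsto u (nhdsWithin a (Ioi a)) (nhds 0) := by
    rw [← hua]; exact hucont.continuousWithinAt.tendsto
  have hlim2 : Filter.Tendsto (fun s => s + (u t₀ - t₀)) (nhdsWithin a (Ioi a))
      (nhds (a + (u t₀ - t₀))) := by
    apply Filter.Tendsto.add _ tendsto_const_nhds
    exact (continuous_id.tendsto a).mono_left nhdsWithin_le_nhds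
  have heq : Filter.Tendsto u (nhdsWithin a (Ioi a)) (nhds (a + (u t₀ - t₀))) := by
    apply hlim2.congr'
    filter_upwards [Ioo_mem_nhdsGT_of_mem (left_mem_Ico.mpr hat₀)] with s hs
    exact (key s hs.1 hs.2).symm
  have : (0:ℝ) = a + (u t₀ - t₀) := tendsto_nhds_unique hlim heq
  have hut₀ : u t₀ = t₀ - a := by linarith
  have hφt₀ : φ t₀ = (t₀ - a) ^ 3 := by
    rw [← hut₀, hu]
    simp only
    rw [← Real.rpow_natCast (φ t₀ ^ ((1:ℝ)/3)) 3, ← Real.rpow_mul (hpos0.le)]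
    norm_num
  rw [hφt₀]
  apply pow_le_pow_left₀ (by linarith) (by linarith)

theorem peano_example_extremal (φ : ℝ → ℝ)
    (hdiff : Differentiable ℝ φ) (h0 : φ 0 = 0)
    (hode : ∀ t : ℝ, deriv φ t = 3 * |φ t| ^ ((2 : ℝ) / 3)) :
    ∀ t : ℝ, (min t 0) ^ 3 ≤ φ t ∧ φ t ≤ (max t 0) ^ 3 := by
  have mono := peano_mono φ hdiff hode
  -- reflected function
  set ψ : ℝ → ℝ := fun t => -φ (-t) with hψ
  have hψdiff : Differentiable ℝ ψ := (hdiff.comp (differentiable_neg)).neg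
  have hψderiv : ∀ t, deriv ψ t = deriv φ (-t) := by
    intro t
    have h1 : HasDerivAt (fun t : ℝ => φ (-t)) (deriv φ (-t) * (-1)) t :=
      (hdiff (-t)).hasDerivAt.comp t (hasDerivAt_neg t)
    have h2 : HasDerivAt ψ (deriv φ (-t)) t := by
      have h3 := h1.neg
      rw [mul_neg, mul_one, neg_neg] at h3
      exact h3
    exact h2.deriv
  have hψode : ∀ t, deriv ψ t = 3 * |ψ t| ^ ((2:ℝ)/3) := by
    intro t
    rw [hψderiv, hode, hψ]
    simp [abs_neg]
  have hψ0 : ψ 0 = 0 := by simp [hψ, h0]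
  have haux := peano_aux φ hdiff h0 hode
  have hauxψ := peano_aux ψ hψdiff hψ0 hψode
  intro t
  rcases le_or_gt 0 t with ht | ht
  · rw [min_eq_right ht, max_eq_left ht]
    constructor
    · simpa using h0 ▸ mono ht
    · exact haux t ht
  · rw [min_eq_left ht.le, max_eq_right ht.le]
    constructor
    · have := hauxψ (-t) (by linarith)
      rw [hψ] at this
      simp only [neg_neg] at this
      nlinarith [this]
    · have : φ t ≤ φ 0 := mono ht.le
      rw [h0] at this
      simpa using this
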